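/- Let K be a field, t ∈ K with t ≠ 0 and t⁸ ≠ 1, and let x₁, x₂, x₃ ∈ K satisfy the three equations: (i) −x₁x₂x₃ − t²(x₁ + x₂ + x₃) + t³(t⁴ − t⁻⁴) = 0; (ii) t(x₁x₂ + x₁x₃ + x₂x₃) − t²(t⁴ − t⁻⁴)(x₁ + x₂ + x₃) + t³(t⁴ − t⁻⁴)² + t³ = 0; (iii) −x₁x₂x₃ − t⁻⁶(x₁ + x₂ + x₃) = 0. Then the multiset {x₁, x₂, x₃} equals the multiset {t⁵, t⁻³, −t⁻³}. -/

import Mathlib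

open Polynomial in
theorem stmt_7 {K : Type*} [Field K] (t : K) (ht : t ≠ 0) (ht8 : t ^ 8 ≠ 1)
    (x₁ x₂ x₃ : K)
    (h1 : -(x₁ * x₂ * x₃) - t ^ 2 * (x₁ + x₂ + x₃) + t ^ 3 * (t ^ 4 - t⁻¹ ^ 4) = 0)
    (h2 : t * (x₁ * x₂ + x₁ * x₃ + x₂ * x₃)
          - t ^ 2 * (t ^ 4 - t⁻¹ ^ 4) * (x₁ + x₂ + x₃)
          + t ^ 3 * (t ^ 4 - t⁻¹ ^ 4) ^ 2 + t ^ 3 = 0)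
    (h3 : -(x₁ * x₂ * x₃) - t⁻¹ ^ 6 * (x₁ + x₂ + x₃) = 0) :
    ({x₁, x₂, x₃} : Multiset K) = {t ^ 5, t⁻¹ ^ 3, -t⁻¹ ^ 3} := by
  have ht8' : t ^ 8 - 1 ≠ 0 := sub_ne_zero.mpr ht8
  have h1' := h1; have h2' := h2; have h3' := h3
  field_simp at h1' h2' h3'
  have hs : x₁ + x₂ + x₃ = t ^ 5 := by
    have key : (t ^ 8 - 1) * (x₁ + x₂ + x₃ - t ^ 5) = 0 := by
      linear_combination h3' - t ^ 5 * h1'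
    rcases mul_eq_zero.mp key with h | h
    · exact absurd h ht8'
    · exact sub_eq_zero.mp h
  have hp : x₁ * x₂ * x₃ = -(t ^ 5 * (t⁻¹ ^ 3 * t⁻¹ ^ 3)) := by
    field_simp
    linear_combination -h1' - t ^ 3 * hs
  have key2 : t ^ 7 * (t ^ 6 * (x₁ * x₂ + x₁ * x₃ + x₂ * x₃) + 1) = 0 := by
    linear_combination t ^ 7 * h2' + (t ^ 10 * (t ^ 8 - 1)) * hs
  have key2' : t ^ 6 * (x₁ * x₂ + x₁ * x₃ + x₂ * x₃) + 1 = 0 :=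
    (mul_eq_zero.mp key2).resolve_left (pow_ne_zero 7 ht)
  have he2 : x₁ * x₂ + x₁ * x₃ + x₂ * x₃ = -(t⁻¹ ^ 3 * t⁻¹ ^ 3) := by
    field_simp
    linear_combination key2'
  have P : (X - C x₁) * (X - C x₂) * (X - C x₃)
      = (X - C (t ^ 5)) * (X - C (t⁻¹ ^ 3)) * (X - C (-t⁻¹ ^ 3)) := by
    have hsC : C x₁ + C x₂ + C x₃ = C (t ^ 5) := by
      rw [← map_add, ← map_add, hs]
    have he2C : C x₁ * C x₂ + C x₁ * C x₃ + C x₂ * C x₃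
        = -(C (t⁻¹ ^ 3) * C (t⁻¹ ^ 3)) := by
      rw [← map_mul, ← map_mul, ← map_mul, ← map_add, ← map_add, he2, ← map_mul, map_neg]
    have hpC : C x₁ * C x₂ * C x₃ = -(C (t ^ 5) * (C (t⁻¹ ^ 3) * C (t⁻¹ ^ 3))) := by
      rw [← map_mul, ← map_mul, hp, ← map_mul, ← map_mul, map_neg]
    rw [map_neg]
    linear_combination (-(X ^ 2) : K[X]) * hsC + X * he2C - hpC
  have := congrArg Polynomial.roots P
  rw [show (X - C x₁) * (X - C x₂) * (X - C x₃)
      = (Multiset.map (fun a => X - C a) ({x₁, x₂, x₃} : Multiset K)).prod by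
      simp [Multiset.prod_cons]; ring,
    show (X - C (t ^ 5)) * (X - C (t⁻¹ ^ 3)) * (X - C (-t⁻¹ ^ 3))
      = (Multiset.map (fun a => X - C a) ({t ^ 5, t⁻¹ ^ 3, -t⁻¹ ^ 3} : Multiset K)).prod by
      simp [Multiset.prod_cons]; ring,
    roots_multiset_prod_X_sub_C, roots_multiset_prod_X_sub_C] at this
  exact this
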